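/- arXiv:2602.07880 — 2 statements merged into one kernel-verified Lean document; each statement's English description precedes it below -/
import Mathlib

section
/- Neighbor property of Farey fractions: let n be a positive integer and let a/b and c/d be rational numbers in [0,1] in lowest terms (gcd(a,b) = 1, gcd(c,d) = 1) with 1 ≤ b ≤ n, 1 ≤ d ≤ n and a/b < c/d. If there is no rational number p/q with 1 ≤ q ≤ n lying strictly between a/b and c/d, then b·c − a·d = 1. -/
/-- Neighbor property of Farey fractions: if `a/b < c/d` are fractions in
`[0,1]` in lowest terms with denominators at most `n`, and no fraction with
denominator at most `n` lies strictly between them, then `b*c - a*d = 1`. -/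
theorem farey_neighbor (n : ℕ) (hn : 0 < n) (a b c d : ℤ)
    (hb1 : 1 ≤ b) (hbn : b ≤ n) (hd1 : 1 ≤ d) (hdn : d ≤ n)
    (hab : Int.gcd a b = 1) (hcd : Int.gcd c d = 1)
    (ha0 : (0 : ℚ) ≤ (a : ℚ) / b) (hc1 : (c : ℚ) / d ≤ 1)
    (hlt : (a : ℚ) / b < (c : ℚ) / d)
    (hno : ¬ ∃ p q : ℤ, 1 ≤ q ∧ q ≤ n ∧
      (a : ℚ) / b < (p : ℚ) / q ∧ (p : ℚ) / q < (c : ℚ) / d) :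
    b * c - a * d = 1 := by
  -- Bezout: b*x0 - a*y0 = 1
  obtain ⟨x0, y0, hxy0⟩ : ∃ x y : ℤ, b * x - a * y = 1 := by
    refine ⟨Int.gcdB a b, -Int.gcdA a b, ?_⟩
    have h := Int.gcd_eq_gcd_ab a b
    rw [hab] at h
    push_cast at h
    linarith
  set t := ((n : ℤ) - y0) / b with ht
  set y := y0 + t * b with hy
  set x := x0 + t * a with hx
  have hbxy : b * x - a * y = 1 := by rw [hx, hy]; linarith [hxy0]
  have hmod : (n : ℤ) - y = ((n : ℤ) - y0) % b := by
    rw [hy, ht, Int.emod_def]; ring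
  have h1 : 0 ≤ (n : ℤ) - y := by rw [hmod]; exact Int.emod_nonneg _ (by omega)
  have h2 : (n : ℤ) - y < b := by rw [hmod]; exact Int.emod_lt_of_pos _ (by omega)
  clear_value x y t
  have hy1 : 1 ≤ y := by omega
  have hyn : y ≤ (n : ℤ) := by omega
  have hbQ : (0 : ℚ) < (b : ℚ) := by exact_mod_cast hb1
  have hyQ : (0 : ℚ) < (y : ℚ) := by exact_mod_cast hy1
  have hdQ : (0 : ℚ) < (d : ℚ) := by exact_mod_cast hd1
  -- a/b < x/y
  have h_ax : (a : ℚ) / b < (x : ℚ) / y := by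
    rw [div_lt_div_iff₀ hbQ hyQ]
    have : a * y < x * b := by linarith
    exact_mod_cast this
  -- x/y is not strictly below c/d
  have hcx : (c : ℚ) / d ≤ (x : ℚ) / y := by
    by_contra h
    push_neg at h
    exact hno ⟨x, y, hy1, hyn, h_ax, h⟩
  have hcxZ : c * y ≤ x * d := by
    rw [div_le_div_iff₀ hdQ hyQ] at hcx
    exact_mod_cast hcx
  have hltZ : a * d < c * b := by
    rw [div_lt_div_iff₀ hbQ hdQ] at hlt
    exact_mod_cast hlt
  have hk1 : 1 ≤ b * c - a * d := by linarith
  -- key identity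
  have hd_id : (d : ℤ) = b * (d * x - c * y) + y * (b * c - a * d) := by
    linear_combination (-d) * hbxy
  -- show d*x - c*y = 0
  have h3 : d * x - c * y = 0 := by
    by_contra hne
    have he1 : 1 ≤ d * x - c * y := by
      rcases lt_or_eq_of_le (by linarith : (0:ℤ) ≤ d * x - c * y) with h | h
      · omega
      · exact absurd h.symm hne
    have hA : b ≤ b * (d * x - c * y) := le_mul_of_one_le_right (by omega) he1
    have hB : y ≤ y * (b * c - a * d) := le_mul_of_one_le_right (by omega) hk1
    linarith
  have hc' : x * (b * c - a * d) = c := by linear_combination c * hbxy - a * h3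
  have hd' : y * (b * c - a * d) = d := by linear_combination d * hbxy - b * h3
  have hdvd : (b * c - a * d) ∣ ((Int.gcd c d : ℤ)) :=
    Int.dvd_coe_gcd ⟨x, by linarith [hc']⟩ ⟨y, by linarith [hd']⟩
  rw [hcd] at hdvd
  have hu : (b * c - a * d) ∣ (1 : ℤ) := by simpa using hdvd
  rcases Int.isUnit_iff.mp (isUnit_of_dvd_one hu) with h | h
  · exact h
  · linarith
end

section
/- The asymptotic proportion of coprime pairs of positive integers is 6/π²: the sequence (1/n²)·#{(a, b) : 1 ≤ a ≤ n, 1 ≤ b ≤ n, gcd(a, b) = 1} tends to 6/π² as n → ∞. -/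
open Filter Real

section Aux

open Finset ArithmeticFunction
open scoped ArithmeticFunction.Moebius ArithmeticFunction.zeta

private lemma aux_sum_moebius (m : ℕ) :
    ∑ d ∈ m.divisors, (μ d : ℤ) = if m = 1 then 1 else 0 := by
  have h2 : ((↑ζ * μ : ArithmeticFunction ℤ)) = 1 := by
    simpa using coe_zeta_mul_coe_moebius (R := ℤ)
  have h : ((↑ζ * μ : ArithmeticFunction ℤ)) m = (1 : ArithmeticFunction ℤ) m := by rw [h2]
  rw [coe_zeta_mul_apply] at h
  rw [h, one_apply]

private lemma aux_divisors_eq (n : ℕ) (p : ℕ × ℕ) (hp : p ∈ Icc 1 n ×ˢ Icc 1 n) :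
    (Nat.gcd p.1 p.2).divisors = (Icc 1 n).filter (fun d => d ∣ p.1 ∧ d ∣ p.2) := by
  simp only [mem_product, mem_Icc] at hp
  obtain ⟨⟨h11, h12⟩, h21, h22⟩ := hp
  have h1 : p.1 ≠ 0 := by omega
  ext d
  simp only [Nat.mem_divisors, mem_filter, mem_Icc, Nat.dvd_gcd_iff]
  constructor
  · rintro ⟨⟨hd1, hd2⟩, -⟩
    have hdn : d ≤ p.1 := Nat.le_of_dvd (by omega) hd1
    have : d ≠ 0 := by rintro rfl; exact h1 (Nat.eq_zero_of_zero_dvd hd1)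
    exact ⟨⟨by omega, by omega⟩, hd1, hd2⟩
  · rintro ⟨-, hd1, hd2⟩
    refine ⟨⟨hd1, hd2⟩, fun h => h1 ?_⟩
    have := Nat.eq_zero_of_gcd_eq_zero_left h
    exact this

private lemma aux_count (n : ℕ) :
    ((((Icc 1 n ×ˢ Icc 1 n).filter (fun p : ℕ × ℕ => Nat.gcd p.1 p.2 = 1)).card : ℤ))
    = ∑ d ∈ Icc 1 n, (μ d : ℤ) * ((n / d : ℕ) : ℤ) ^ 2 := by
  rw [Finset.card_filter]
  simp only [Nat.cast_sum, Nat.cast_ite, Nat.cast_one, Nat.cast_zero]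
  have step1 : ∀ p ∈ Icc 1 n ×ˢ Icc 1 n,
      (if Nat.gcd p.1 p.2 = 1 then (1:ℤ) else 0)
      = ∑ d ∈ Icc 1 n, (if d ∣ p.1 ∧ d ∣ p.2 then (μ d : ℤ) else 0) := by
    intro p hp
    rw [← aux_sum_moebius, aux_divisors_eq n p hp, Finset.sum_filter]
  rw [Finset.sum_congr rfl step1, Finset.sum_comm]
  refine Finset.sum_congr rfl fun d hd => ?_
  rw [← Finset.sum_filter]
  have hfp : (Icc 1 n ×ˢ Icc 1 n).filter (fun p : ℕ × ℕ => d ∣ p.1 ∧ d ∣ p.2)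
      = ((Icc 1 n).filter (d ∣ ·)) ×ˢ ((Icc 1 n).filter (d ∣ ·)) := by
    rw [Finset.filter_product]
  have hcard : ((Icc 1 n).filter (d ∣ ·)).card = n / d := by
    rw [show Icc 1 n = Ioc 0 n from rfl]
    exact Nat.Ioc_filter_dvd_card_eq_div n d
  rw [hfp, Finset.sum_const, Finset.card_product, hcard, nsmul_eq_mul]
  push_cast [-Int.natCast_ediv]
  ring

private lemma aux_summable : Summable (fun d : ℕ => (μ d : ℝ) * (1 / (d:ℝ)) ^ 2) := by
  apply Summable.of_norm_bounded (g := fun d : ℕ => (1 / (d:ℝ)) ^ 2)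
  · simpa [one_div] using (Real.summable_one_div_nat_pow (p := 2)).mpr one_lt_two
  · intro d
    rw [norm_mul, norm_pow]
    calc ‖(μ d : ℝ)‖ * ‖(1/(d:ℝ))‖^2 ≤ 1 * ‖(1/(d:ℝ))‖^2 := by
          apply mul_le_mul_of_nonneg_right _ (by positivity)
          have := abs_moebius_le_one (n := d)
          rw [Real.norm_eq_abs]
          exact_mod_cast (by exact_mod_cast this : |(μ d : ℝ)| ≤ 1)
      _ = (1/(d:ℝ))^2 := by rw [one_mul, Real.norm_eq_abs, sq_abs]

private lemma aux_tsum_val : ∑' d : ℕ, (μ d : ℝ) * (1 / (d:ℝ)) ^ 2 = 6 / π ^ 2 := by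
  have hs : (1 : ℝ) < (2 : ℂ).re := by norm_num
  have hmul := LSeries_zeta_mul_Lseries_moebius (s := 2) hs
  rw [LSeries_zeta_eq_riemannZeta hs, riemannZeta_two] at hmul
  have hpi : (π:ℂ)^2 ≠ 0 := by simp [Real.pi_ne_zero]
  have hmoeb : LSeries (fun n => ((μ n : ℂ))) 2 = 6 / (π:ℂ)^2 := by
    field_simp at hmul ⊢
    linear_combination hmul
  have hterm : ∀ d : ℕ, (((((μ d : ℝ) * (1 / (d:ℝ)) ^ 2) : ℝ)) : ℂ)
      = LSeries.term (fun n => ((μ n : ℂ))) 2 d := by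
    intro d
    rcases eq_or_ne d 0 with rfl | hd
    · simp [LSeries.term]
    · rw [LSeries.term_of_ne_zero hd]
      have : ((d:ℂ)) ^ (2:ℂ) = ((d:ℂ)) ^ (2:ℕ) := by
        rw [show (2:ℂ) = ((2:ℕ):ℂ) by norm_num, Complex.cpow_natCast]
      rw [this]
      push_cast
      field_simp
  apply Complex.ofReal_injective
  rw [Complex.ofReal_tsum, tsum_congr hterm]
  rw [show (∑' d, LSeries.term (fun n => ((μ n : ℂ))) 2 d)
      = LSeries (fun n => ((μ n : ℂ))) 2 from rfl, hmoeb]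
  push_cast
  ring

private lemma aux_upper (d n : ℕ) (hd : 0 < d) : (((n / d : ℕ) : ℝ) / n) ≤ 1 / d := by
  rcases Nat.eq_zero_or_pos n with rfl | hn
  · simp
  have h1 : ((n / d : ℕ) : ℝ) ≤ (n : ℝ) / d := Nat.cast_div_le
  have hn' : (0:ℝ) < n := by exact_mod_cast hn
  have hd' : (0:ℝ) < d := by exact_mod_cast hd
  calc ((n / d : ℕ) : ℝ) / n ≤ ((n:ℝ)/d) / n := by gcongr
    _ = 1 / d := by field_simp

private lemma aux_lower (d n : ℕ) (hd : 0 < d) (hn : 0 < n) :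
    1 / (d:ℝ) - 1 / n ≤ ((n / d : ℕ) : ℝ) / n := by
  have key : (n:ℝ) < d * ((n / d : ℕ) : ℝ) + d := by
    have h := Nat.div_add_mod n d
    have h2 := Nat.mod_lt n hd
    have : n < d * (n / d) + d := by omega
    exact_mod_cast this
  have hn' : (0:ℝ) < n := by exact_mod_cast hn
  have hd' : (0:ℝ) < d := by exact_mod_cast hd
  rw [div_sub_div _ _ (ne_of_gt hd') (ne_of_gt hn'), div_le_div_iff₀ (by positivity) hn']
  nlinarith [mul_pos hd' hn']

private lemma aux_ratio_tendsto (d : ℕ) (hd : 0 < d) :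
    Tendsto (fun n : ℕ => ((n / d : ℕ) : ℝ) / n) atTop (nhds (1 / d)) := by
  apply tendsto_of_tendsto_of_tendsto_of_le_of_le'
    (g := fun n : ℕ => 1 / (d:ℝ) - 1 / n) (h := fun _ : ℕ => 1 / (d:ℝ))
  · have : Tendsto (fun n : ℕ => 1 / (n:ℝ)) atTop (nhds 0) :=
      tendsto_one_div_atTop_nhds_zero_nat
    simpa using tendsto_const_nhds.sub this
  · exact tendsto_const_nhds
  · filter_upwards [eventually_ge_atTop 1] with n hn
    exact aux_lower d n hd hn
  · filter_upwards with n
    exact aux_upper d n hd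

private lemma aux_main_tendsto :
    Tendsto (fun n : ℕ => ∑' d : ℕ, (μ d : ℝ) * (((n / d : ℕ) : ℝ) / n) ^ 2) atTop
      (nhds (∑' d : ℕ, (μ d : ℝ) * (1 / (d:ℝ)) ^ 2)) := by
  apply tendsto_tsum_of_dominated_convergence (bound := fun d : ℕ => (1 / (d:ℝ)) ^ 2)
  · simpa [one_div] using (Real.summable_one_div_nat_pow (p := 2)).mpr one_lt_two
  · intro d
    rcases Nat.eq_zero_or_pos d with rfl | hd
    · simp
    · exact ((aux_ratio_tendsto d hd).pow 2).const_mul _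
  · filter_upwards with n
    intro d
    rcases Nat.eq_zero_or_pos d with rfl | hd
    · simp
    have hb : |(((n / d : ℕ) : ℝ) / n)| ≤ 1 / d := by
      rw [abs_of_nonneg (by positivity)]
      exact aux_upper d n hd
    have hmu : |(μ d : ℝ)| ≤ 1 := by exact_mod_cast abs_moebius_le_one (n := d)
    rw [norm_mul, norm_pow, Real.norm_eq_abs, Real.norm_eq_abs]
    calc |(μ d : ℝ)| * |(((n / d : ℕ) : ℝ) / n)| ^ 2
        ≤ 1 * (1/(d:ℝ)) ^ 2 := by
          apply mul_le_mul hmu _ (by positivity) zero_le_one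
          exact pow_le_pow_left₀ (abs_nonneg _) hb 2
      _ = (1/(d:ℝ))^2 := one_mul _

private lemma aux_eq (n : ℕ) (hn : 1 ≤ n) :
    (((Icc 1 n ×ˢ Icc 1 n).filter (fun p : ℕ × ℕ => Nat.gcd p.1 p.2 = 1)).card : ℝ) / (n : ℝ) ^ 2
    = ∑' d : ℕ, (μ d : ℝ) * (((n / d : ℕ) : ℝ) / n) ^ 2 := by
  have hn' : (0:ℝ) < n := by exact_mod_cast hn
  have hc : (((Icc 1 n ×ˢ Icc 1 n).filter (fun p : ℕ × ℕ => Nat.gcd p.1 p.2 = 1)).card : ℝ)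
      = ∑ d ∈ Icc 1 n, (μ d : ℝ) * ((n / d : ℕ) : ℝ) ^ 2 := by
    have h := congrArg (fun z : ℤ => (z : ℝ)) (aux_count n)
    push_cast [-Int.cast_natCast, -Int.natCast_ediv] at h
    convert h using 1 <;> push_cast [-Int.natCast_ediv] <;> ring
  rw [tsum_eq_sum (s := Icc 1 n) ?_]
  · rw [hc, Finset.sum_div]
    refine Finset.sum_congr rfl fun d hd => ?_
    rw [div_pow]
    field_simp
  · intro d hd
    simp only [mem_Icc, not_and_or, not_le] at hd
    rcases hd with hd | hd
    · interval_cases d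
      simp
    · have : n / d = 0 := Nat.div_eq_of_lt hd
      simp [this]

end Aux

/-- The asymptotic proportion of coprime pairs of positive integers is `6/π²`:
the number of pairs `(a, b)` with `1 ≤ a, b ≤ n` and `gcd a b = 1`, divided by
`n²`, tends to `6/π²` as `n → ∞`. -/
theorem coprime_pairs_density :
    Tendsto (fun n : ℕ =>
      (((Finset.Icc 1 n ×ˢ Finset.Icc 1 n).filter
          (fun p : ℕ × ℕ => Nat.gcd p.1 p.2 = 1)).card : ℝ) / (n : ℝ) ^ 2)
      atTop (nhds (6 / π ^ 2)) := by
  have h := aux_main_tendsto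
  rw [aux_tsum_val] at h
  apply h.congr'
  filter_upwards [eventually_ge_atTop 1] with n hn
  exact (aux_eq n hn).symm
end
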